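/- Let K be a symmetric positive definite n×n real matrix, let f ∈ ℝⁿ, and let c = K⁻¹ f. Let V ⊊ {1, ..., n} be a nonempty set of validation indices and let T = {1, ..., n} \ V be the (nonempty) complementary training indices. The principal submatrix K_{T,T} is positive definite, hence invertible; let β = (K_{T,T})⁻¹ f_T be the coefficients of the kernel interpolant trained on T, and define the residual vector e ∈ ℝ^V by e_i = f_i − Σ_{j ∈ T} K_{i,j} β_j for i ∈ V. Then e is the unique solution of the linear system (K⁻¹)_{V,V} e = c_V, where (K⁻¹)_{V,V} is the principal submatrix of K⁻¹ with rows and columns restricted to V and c_V is the restriction of c to the indices in V. -/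

import Mathlib

open Matrix


lemma sum_extend_finset {n : ℕ} (S : Finset (Fin n)) (F : Fin n → ℝ)
    (hF : ∀ k ∉ S, F k = 0) :
    ∑ k, F k = ∑ k : {i // i ∈ S}, F k := by
  calc ∑ k, F k = ∑ k ∈ S, F k :=
        (Finset.sum_subset S.subset_univ (fun k _ hk => hF k hk)).symm
    _ = ∑ k : {i // i ∈ S}, F k := (Finset.sum_coe_sort S F).symm

lemma posdef_submatrix {n : ℕ} {M : Matrix (Fin n) (Fin n) ℝ} (hM : M.PosDef)
    (S : Finset (Fin n)) :
    (M.submatrix (Subtype.val : {i // i ∈ S} → Fin n) Subtype.val).PosDef := by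
  refine Matrix.PosDef.of_dotProduct_mulVec_pos (hM.isHermitian.submatrix _) fun x hx => ?_
  set y : Fin n → ℝ := fun k => if h : k ∈ S then x ⟨k, h⟩ else 0 with hy
  have hyS : ∀ k (h : k ∈ S), y k = x ⟨k, h⟩ := fun k h => by simp [hy, h]
  have hy0 : ∀ k ∉ S, y k = 0 := fun k h => by simp [hy, h]
  have hyne : y ≠ 0 := by
    intro h0
    apply hx
    funext i
    have := congrFun h0 i.1
    rwa [hyS i.1 i.2] at this
  have key : star x ⬝ᵥ (M.submatrix Subtype.val Subtype.val) *ᵥ x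
      = star y ⬝ᵥ M *ᵥ y := by
    simp only [dotProduct, Matrix.mulVec, Pi.star_apply, star_trivial,
      Matrix.submatrix_apply]
    rw [sum_extend_finset S (fun k => y k * ∑ l, M k l * y l)
      (fun k hk => by simp [hy0 k hk])]
    refine Finset.sum_congr rfl fun k _ => ?_
    rw [hyS k.1 k.2]
    congr 1
    rw [sum_extend_finset S (fun l => M k.1 l * y l)
      (fun l hl => by simp [hy0 l hl])]
    exact Finset.sum_congr rfl fun l _ => by rw [hyS l.1 l.2]
  rw [key]
  exact hM.dotProduct_mulVec_pos hyne



/-- **Extended Rippa's Algorithm.** Let `K` be a symmetric positive definite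
`n × n` real matrix, `f ∈ ℝⁿ` and `c = K⁻¹ f`. Let `V ⊊ {1, …, n}` be a nonempty set of
validation indices with complementary training indices `T = Vᶜ`. The principal submatrix
`K_{T,T}` is positive definite; with `β = (K_{T,T})⁻¹ f_T` and validation residuals
`e i = f i − ∑_{j ∈ T} K i j * β j` (for `i ∈ V`), the vector `e` is the unique solution
of the linear system `(K⁻¹)_{V,V} e = c_V`. -/
theorem extended_rippa
    (n : ℕ) (K : Matrix (Fin n) (Fin n) ℝ) (hK : K.PosDef)
    (f : Fin n → ℝ) (c : Fin n → ℝ) (hc : c = K⁻¹.mulVec f)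
    (V : Finset (Fin n)) (hVne : V.Nonempty) (hVproper : V ≠ Finset.univ)
    (T : Finset (Fin n)) (hT : T = Vᶜ)
    (KTT : Matrix {i // i ∈ T} {i // i ∈ T} ℝ)
    (hKTT : KTT = K.submatrix (Subtype.val : {i // i ∈ T} → Fin n) Subtype.val)
    (β : {i // i ∈ T} → ℝ) (hβ : β = KTT⁻¹.mulVec (fun j : {i // i ∈ T} => f j))
    (e : {i // i ∈ V} → ℝ)
    (he : ∀ i : {i // i ∈ V}, e i = f i - ∑ j : {i // i ∈ T}, K i j * β j)
    (M : Matrix {i // i ∈ V} {i // i ∈ V} ℝ)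
    (hM : M = (K⁻¹).submatrix (Subtype.val : {i // i ∈ V} → Fin n) Subtype.val) :
    KTT.PosDef ∧
    M.mulVec e = (fun i : {i // i ∈ V} => c i) ∧
    (∀ e' : {i // i ∈ V} → ℝ,
      M.mulVec e' = (fun i : {i // i ∈ V} => c i) → e' = e) := by
  have hTmem : ∀ j : Fin n, j ∈ T ↔ j ∉ V := by simp [hT]
  subst hKTT hM
  -- positive definiteness of the training submatrix
  have hpd : (K.submatrix (Subtype.val : {i // i ∈ T} → Fin n) Subtype.val).PosDef :=
    posdef_submatrix hK T
  have hMpd : ((K⁻¹).submatrix (Subtype.val : {i // i ∈ V} → Fin n) Subtype.val).PosDef :=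
    posdef_submatrix hK.inv V
  haveI := hpd.isUnit.invertible
  haveI := hK.isUnit.invertible
  set KTT := K.submatrix (Subtype.val : {i // i ∈ T} → Fin n) Subtype.val with hKTT
  -- the interpolation system on T is solved by β
  have hβeq : KTT *ᵥ β = fun j : {i // i ∈ T} => f j := by
    rw [hβ, Matrix.mulVec_mulVec, Matrix.mul_inv_of_invertible, Matrix.one_mulVec]
  -- extend β by zero
  set b : Fin n → ℝ := fun k => if h : k ∈ T then β ⟨k, h⟩ else 0 with hb
  have hbT : ∀ k (h : k ∈ T), b k = β ⟨k, h⟩ := fun k h => by simp [hb, h]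
  have hb0 : ∀ k ∉ T, b k = 0 := fun k h => by simp [hb, h]
  have hKb : ∀ i, (K *ᵥ b) i = ∑ j : {i // i ∈ T}, K i j.1 * β j := by
    intro i
    simp only [Matrix.mulVec, dotProduct]
    rw [sum_extend_finset T (fun k => K i k * b k) (fun k hk => by simp [hb0 k hk])]
    exact Finset.sum_congr rfl fun k _ => by rw [hbT k.1 k.2]
  set u : Fin n → ℝ := f - K *ᵥ b with hu
  have huapp : ∀ i, u i = f i - (K *ᵥ b) i := fun i => rfl
  have huT : ∀ j, j ∈ T → u j = 0 := by
    intro j hj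
    have h2 := congrFun hβeq ⟨j, hj⟩
    simp only [Matrix.mulVec, dotProduct, hKTT, Matrix.submatrix_apply] at h2
    rw [huapp, hKb, ← h2, sub_self]
  have huV : ∀ i : {i // i ∈ V}, u i.1 = e i := by
    intro i
    rw [he i, huapp, hKb]
  have hKinvu : K⁻¹ *ᵥ u = fun i => c i - b i := by
    funext i
    rw [hu, Matrix.mulVec_sub, Matrix.mulVec_mulVec, Matrix.inv_mul_of_invertible,
      Matrix.one_mulVec, hc]
    simp
  have hmain : ((K⁻¹).submatrix (Subtype.val : {i // i ∈ V} → Fin n) Subtype.val) *ᵥ e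
      = fun i : {i // i ∈ V} => c i := by
    funext i
    have h1 := congrFun hKinvu i.1
    have hb0' : b i.1 = 0 := hb0 i.1 (by rw [hTmem]; simp [i.2])
    rw [hb0', sub_zero] at h1
    rw [← h1]
    simp only [Matrix.mulVec, dotProduct, Matrix.submatrix_apply]
    rw [sum_extend_finset V (fun j => K⁻¹ i.1 j * u j)
      (fun j hj => by simp [huT j ((hTmem j).mpr hj)])]
    exact Finset.sum_congr rfl fun j _ => by rw [huV j]
  refine ⟨hpd, hmain, ?_⟩
  intro e' he'
  have hinj : Function.Injective
      (((K⁻¹).submatrix (Subtype.val : {i // i ∈ V} → Fin n) Subtype.val).mulVec) :=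
    Matrix.mulVec_injective_iff_isUnit.mpr hMpd.isUnit
  exact hinj (he'.trans hmain.symm)
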